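/- Fix constants C > 0 and 0 < θ < 1 and let f be a C^1 function with |∂f/∂v| ≤ C |f| for a C^1 unit vector field v and ‖grad f‖ ≥ C' |f|^θ on a region off V(f). Then the orthogonal projection w = v - (∂f/∂v / ‖grad f‖^2) grad f of v onto the levels of f satisfies: ∂f/∂w = 0 everywhere w is defined, and ‖w - v‖ ≤ (C/C') |f|^{1-θ}; in particular w extends continuously to V(f) by v. -/

import Mathlib

/-- The key estimate in the proof that Zariski equisingularity gives topological
triviality of the defining function: if `v` is a unit vector field, `g = grad f ≠ 0` on
`S`, `|∂f/∂v| = |⟨v, grad f⟩| ≤ C |f|` and the Łojasiewicz inequality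
`‖grad f‖ ≥ C' |f|^θ` holds on `S` with `0 < θ < 1`, then the orthogonal projection
`w = v - (⟨v, grad f⟩/‖grad f‖²) grad f` of `v` onto the levels of `f` satisfies
`∂f/∂w = 0` on `S` and `‖w - v‖ ≤ (C/C') |f|^{1-θ}`; in particular `w` extends
continuously to `V(f)` by `v`. -/
theorem stmt16 {E : Type*} [NormedAddCommGroup E] [InnerProductSpace ℝ E] [CompleteSpace E]
    (f : E → ℝ) (v g w : E → E) (S : Set E)
    (C C' θ : ℝ) (hC : 0 < C) (hC' : 0 < C') (hθ0 : 0 < θ) (hθ1 : θ < 1)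
    (hunit : ∀ x ∈ S, ‖v x‖ = 1)
    (hgrad : ∀ x ∈ S, HasGradientAt f (g x) x)
    (hgne : ∀ x ∈ S, g x ≠ 0)
    (hCb : ∀ x ∈ S, |(inner ℝ (v x) (g x) : ℝ)| ≤ C * |f x|)
    (hLoj : ∀ x ∈ S, C' * |f x| ^ θ ≤ ‖g x‖)
    (hw : ∀ x ∈ S, w x = v x - (((inner ℝ (v x) (g x) : ℝ)) / ‖g x‖ ^ 2) • g x) :
    (∀ x ∈ S, (inner ℝ (w x) (g x) : ℝ) = 0) ∧
    (∀ x ∈ S, ‖w x - v x‖ ≤ (C / C') * |f x| ^ (1 - θ)) ∧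
    (∀ x₀ : E, f x₀ = 0 → ContinuousAt f x₀ → ContinuousAt v x₀ →
      Filter.Tendsto w (nhdsWithin x₀ S) (nhds (v x₀))) := by
  have hdiff : ∀ x ∈ S, ‖w x - v x‖ = |(inner ℝ (v x) (g x) : ℝ)| / ‖g x‖ := by
    intro x hx
    have hg := hgne x hx
    have hgn : (0:ℝ) < ‖g x‖ := norm_pos_iff.mpr hg
    rw [hw x hx]
    rw [sub_sub_cancel_left, norm_neg, norm_smul]
    rw [Real.norm_eq_abs, abs_div, abs_of_nonneg (by positivity : (0:ℝ) ≤ ‖g x‖ ^ 2)]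
    field_simp
  have hbound : ∀ x ∈ S, ‖w x - v x‖ ≤ (C / C') * |f x| ^ (1 - θ) := by
    intro x hx
    rw [hdiff x hx]
    have hg := hgne x hx
    have hgn : (0:ℝ) < ‖g x‖ := norm_pos_iff.mpr hg
    rcases eq_or_ne (f x) 0 with hf0 | hf0
    · have h1 : |(inner ℝ (v x) (g x) : ℝ)| ≤ 0 := by
        have := hCb x hx; rwa [hf0, abs_zero, mul_zero] at this
      have h2 : |(inner ℝ (v x) (g x) : ℝ)| = 0 := le_antisymm h1 (abs_nonneg _)
      rw [h2, zero_div, hf0, abs_zero, Real.zero_rpow (by linarith), mul_zero]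
    · have hfp : (0:ℝ) < |f x| := abs_pos.mpr hf0
      have hLpos : (0:ℝ) < C' * |f x| ^ θ := by positivity
      calc |(inner ℝ (v x) (g x) : ℝ)| / ‖g x‖
          ≤ (C * |f x|) / (C' * |f x| ^ θ) := by
            apply div_le_div₀ (by positivity) (hCb x hx) hLpos (hLoj x hx)
        _ = (C / C') * |f x| ^ (1 - θ) := by
            rw [Real.rpow_sub hfp, Real.rpow_one]
            field_simp
  refine ⟨?_, hbound, ?_⟩
  · intro x hx
    have hg := hgne x hx
    have hgn2 : ‖g x‖ ^ 2 ≠ 0 := pow_ne_zero _ (norm_ne_zero_iff.mpr hg)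
    rw [hw x hx, inner_sub_left, real_inner_smul_left]
    rw [real_inner_self_eq_norm_sq]
    field_simp
    ring
  · intro x₀ hf0 hfc hvc
    have hwv : Filter.Tendsto (fun x => w x - v x) (nhdsWithin x₀ S) (nhds 0) := by
      refine squeeze_zero_norm' (a := fun x => (C / C') * |f x| ^ (1 - θ)) ?_ ?_
      · filter_upwards [self_mem_nhdsWithin] with x hx using hbound x hx
      · have hf' : Filter.Tendsto (fun x => |f x|) (nhdsWithin x₀ S) (nhds 0) := by
          have := (hfc.continuousWithinAt (s := S)).abs
          simpa [hf0, ContinuousWithinAt] using this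
        have hpow : Filter.Tendsto (fun x => |f x| ^ (1 - θ)) (nhdsWithin x₀ S)
            (nhds 0) := by
          have hc : ContinuousAt (fun y : ℝ => y ^ (1 - θ)) 0 := by
            apply Real.continuousAt_rpow_const
            right; linarith
          have := hc.tendsto.comp hf'
          simpa [Real.zero_rpow (by linarith : (1:ℝ) - θ ≠ 0), Function.comp_def] using this
        have := hpow.const_mul (C / C')
        simpa using this
    have hv : Filter.Tendsto v (nhdsWithin x₀ S) (nhds (v x₀)) :=
      hvc.continuousWithinAt
    have := hwv.add hv
    simpa using this
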